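/- Let G : ℕ → ℂ satisfy G(i+2) = G(i+1) + G(i) for all i ≥ 0. Then for every nonnegative integer k, ∑_{j=1}^{k} (−1)^{j−1} · G(2j−1) = −(1/5)·G(0) + (2/5)·G(1) + (−1)^k·(1/5)·G(2k) − (−1)^k·(2/5)·G(2k+1). -/

import Mathlib

theorem alternating_odd_index_sum (G : ℕ → ℂ) (hG : ∀ i, G (i + 2) = G (i + 1) + G i)
    (k : ℕ) :
    ∑ j ∈ Finset.Icc 1 k, (-1 : ℂ) ^ (j - 1) * G (2 * j - 1) =
      -(1 / 5) * G 0 + (2 / 5) * G 1 + (-1 : ℂ) ^ k * (1 / 5) * G (2 * k)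
        - (-1 : ℂ) ^ k * (2 / 5) * G (2 * k + 1) := by
  induction k with
  | zero => simp
  | succ k ih =>
    rw [Finset.sum_Icc_succ_top (by omega), ih]
    have h1 := hG (2 * k)
    have h2 := hG (2 * k + 1)
    have e1 : 2 * (k + 1) - 1 = 2 * k + 1 := by omega
    have e2 : k + 1 - 1 = k := by omega
    have e3 : 2 * (k + 1) = 2 * k + 1 + 1 := by omega
    have e4 : 2 * (k + 1) + 1 = 2 * k + 1 + 2 := by omega
    rw [e1, e2, e3, show 2 * k + 1 + 1 + 1 = 2 * k + 1 + 2 from rfl, h2,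
      show 2 * k + 1 + 1 = 2 * k + 2 from rfl, h1]
    ring
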